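/- For every θ ∈ ℝ and every polynomial f of degree at most 2, E_f(C_θ) = E_f(C_{D_4}), where E_f(C_θ) and E_f(C_{D_4}) are given by the explicit formulas below. -/
import Mathlib


open Real

noncomputable def energyC (f : ℝ → ℝ) (θ : ℝ) : ℝ :=
  18 * (f 0 + f (Real.sin (2 * θ)))
    + 36 * (f (Real.sin θ) + f (Real.cos θ))
    + 36 * (f (Real.sin θ ^ 2 - Real.cos θ ^ 2 / 2) + f (Real.cos θ ^ 2 - Real.sin θ ^ 2 / 2))
    + 72 * (f (-(Real.sin θ / 2)) + f (-(Real.cos θ / 2)) + f (Real.sin (2 * θ) / 4)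
        + f (-(Real.sin (2 * θ) / 2)))
    + 84 * f (-(1/2))

noncomputable def energyD4 (f : ℝ → ℝ) : ℝ :=
  24 * f (-1) + 192 * (f (1/2) + f (-(1/2))) + 144 * f 0

theorem stmt1 (θ : ℝ) (f : Polynomial ℝ) (hf : f.degree ≤ 2) :
    energyC (fun t => f.eval t) θ = energyD4 (fun t => f.eval t) := by
  have h3 : f.natDegree < 3 := by
    have := Polynomial.natDegree_le_of_degree_le (n := 2) hf
    omega
  have heval : ∀ t : ℝ, f.eval t = f.coeff 0 + f.coeff 1 * t + f.coeff 2 * t ^ 2 := by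
    intro t
    rw [Polynomial.eval_eq_sum_range' h3]
    simp [Finset.sum_range_succ]
  have hs := sin_sq_add_cos_sq θ
  have h2 := Real.sin_two_mul θ
  simp only [energyC, energyD4, heval, h2]
  linear_combination (18 * f.coeff 1 + f.coeff 2 * (45 * (sin θ ^ 2 + cos θ ^ 2) + 99)) * hs
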